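/- Let λ^L, λ^C: ℝ → ℝ with λ^L decreasing and λ^C increasing, and suppose there exists c > 0 such that for all q ∈ ℝ and all x ≥ 0, λ^L(q) − λ^L(q+x) + λ^C(q+x) − λ^C(q) ≥ c x. Let Y: [0,∞) → ℝ be continuous, f: [0,∞) → [0,∞) continuous with f(s) = 0 for s > t. If q and \bar{q} are C¹ solutions on [0,∞) of q'(s) = λ^L(q(s)) − λ^C(q(s)) − Y(s) and \bar{q}'(s) = λ^L(\bar{q}(s)) − λ^C(\bar{q}(s)) − Y(s) + f(s) with q(0) = \bar{q}(0), then for all s ≥ t: 0 ≤ \bar{q}(s) − q(s) ≤ (∫₀^t f(u) du) · exp(−c(s − t)). -/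

import Mathlib

open MeasureTheory Set

/-- Comparison + Grönwall estimate for the queue with and without a metaorder:
after the forcing `f` (supported in `[0, t]`) stops, the difference of the two
solutions is nonnegative and decays exponentially at rate `c`. -/
theorem stmt3 (lamL lamC Y f q qbar : ℝ → ℝ) (c t : ℝ) (hc : 0 < c) (ht : 0 ≤ t)
    (hL : Antitone lamL) (hC : Monotone lamC)
    (hgap : ∀ p x : ℝ, 0 ≤ x → c * x ≤ lamL p - lamL (p + x) + lamC (p + x) - lamC p)
    (hY : Continuous Y) (hf : Continuous f) (hfnn : ∀ s, 0 ≤ f s)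
    (hft : ∀ s, t < s → f s = 0)
    (hq : ∀ s, 0 ≤ s → HasDerivAt q (lamL (q s) - lamC (q s) - Y s) s)
    (hqbar : ∀ s, 0 ≤ s → HasDerivAt qbar (lamL (qbar s) - lamC (qbar s) - Y s + f s) s)
    (h0 : q 0 = qbar 0) :
    ∀ s, t ≤ s →
      0 ≤ qbar s - q s ∧
      qbar s - q s ≤ (∫ u in (0:ℝ)..t, f u) * Real.exp (-c * (s - t)) := by
  have hd : ∀ s : ℝ, 0 ≤ s → HasDerivAt (fun u => qbar u - q u)
      ((lamL (qbar s) - lamC (qbar s) - Y s + f s) - (lamL (q s) - lamC (q s) - Y s)) s :=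
    fun s hs => (hqbar s hs).sub (hq s hs)
  have hd0 : qbar 0 - q 0 = 0 := by rw [h0]; ring
  -- nonnegativity of the difference
  have hnn : ∀ s : ℝ, 0 ≤ s → 0 ≤ qbar s - q s := by
    intro s0 hs0
    by_contra hneg
    push_neg at hneg
    set A : Set ℝ := Icc 0 s0 ∩ (fun u => qbar u - q u) ⁻¹' Ici 0 with hA
    have hcont : ContinuousOn (fun u => qbar u - q u) (Icc 0 s0) := fun s hs =>
      ((hd s hs.1).continuousAt).continuousWithinAt
    have hAclosed : IsClosed A :=
      hcont.preimage_isClosed_of_isClosed isClosed_Icc isClosed_Ici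
    have hA0 : (0:ℝ) ∈ A := ⟨⟨le_refl 0, hs0⟩, by simp [hd0]⟩
    have hAcp : IsCompact A := isCompact_Icc.of_isClosed_subset hAclosed inter_subset_left
    have hs1A : sSup A ∈ A := hAcp.sSup_mem ⟨0, hA0⟩
    set s1 := sSup A with hs1
    have hs1nn : 0 ≤ s1 := hs1A.1.1
    have hs1le : s1 ≤ s0 := hs1A.1.2
    have hs1lt : s1 < s0 := by
      rcases lt_or_eq_of_le hs1le with h | h
      · exact h
      · exfalso; have := hs1A.2; rw [h] at this
        simp only [mem_preimage, mem_Ici] at this; linarith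
    have hmono : MonotoneOn (fun u => qbar u - q u) (Icc s1 s0) := by
      apply monotoneOn_of_deriv_nonneg (convex_Icc _ _)
      · exact fun s hs => ((hd s (hs1nn.trans hs.1)).continuousAt).continuousWithinAt
      · intro s hs
        rw [interior_Icc] at hs
        exact ((hd s (hs1nn.trans hs.1.le)).differentiableAt).differentiableWithinAt
      · intro s hs
        rw [interior_Icc] at hs
        have hspos : 0 ≤ s := hs1nn.trans hs.1.le
        have hdneg : qbar s - q s < 0 := by
          by_contra hge
          push_neg at hge
          have hmem : s ∈ A := ⟨⟨hspos, hs.2.le⟩, by simpa using hge⟩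
          exact absurd (le_csSup hAcp.bddAbove hmem) (not_le.mpr hs.1)
        have hg := hgap (qbar s) (q s - qbar s) (by linarith)
        rw [show qbar s + (q s - qbar s) = q s by ring] at hg
        rw [(hd s hspos).deriv]
        have h3 := hfnn s
        have h4 : 0 ≤ c * (q s - qbar s) := mul_nonneg hc.le (by linarith)
        linarith
    have h1 := hmono ⟨le_refl s1, hs1le⟩ ⟨hs1lt.le, le_refl s0⟩ hs1le
    have h2 : (0:ℝ) ≤ qbar s1 - q s1 := hs1A.2
    simp only at h1
    linarith
  -- d t ≤ ∫₀ᵗ f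
  have hfd : ∀ s : ℝ, HasDerivAt (fun u => ∫ x in (0:ℝ)..u, f x) (f s) s :=
    fun s => (hf.integral_hasStrictDerivAt 0 s).hasDerivAt
  have hanti : AntitoneOn (fun u => (qbar u - q u) - ∫ x in (0:ℝ)..u, f x) (Icc 0 t) := by
    apply antitoneOn_of_deriv_nonpos (convex_Icc _ _)
    · exact fun s hs => (((hd s hs.1).sub (hfd s)).continuousAt).continuousWithinAt
    · intro s hs
      rw [interior_Icc] at hs
      exact (((hd s hs.1.le).sub (hfd s)).differentiableAt).differentiableWithinAt
    · intro s hs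
      rw [interior_Icc] at hs
      rw [HasDerivAt.deriv (f := fun u => (qbar u - q u) - ∫ x in (0:ℝ)..u, f x) ((hd s hs.1.le).sub (hfd s))]
      have hg := hgap (q s) (qbar s - q s) (hnn s hs.1.le)
      rw [show q s + (qbar s - q s) = qbar s by ring] at hg
      nlinarith [hnn s hs.1.le, hc]
  have hdt : qbar t - q t ≤ ∫ u in (0:ℝ)..t, f u := by
    have h1 := hanti ⟨le_refl 0, ht⟩ ⟨ht, le_refl t⟩ ht
    simp only [intervalIntegral.integral_same, hd0, sub_zero] at h1
    linarith
  -- exponential decay after time t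
  have hexp : ∀ s : ℝ, HasDerivAt (fun u : ℝ => Real.exp (c * u)) (Real.exp (c * s) * c) s := by
    intro s
    simpa using (HasDerivAt.exp ((hasDerivAt_id s).const_mul c))
  have hFanti : AntitoneOn (fun u => (qbar u - q u) * Real.exp (c * u)) (Ici t) := by
    apply antitoneOn_of_deriv_nonpos (convex_Ici _)
    · intro s hs
      exact (((hd s (ht.trans hs)).mul (hexp s)).continuousAt).continuousWithinAt
    · intro s hs
      rw [interior_Ici] at hs
      exact (((hd s (ht.trans hs.le)).mul (hexp s)).differentiableAt).differentiableWithinAt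
    · intro s hs
      rw [interior_Ici] at hs
      have hs0 : 0 ≤ s := ht.trans hs.le
      rw [HasDerivAt.deriv (f := fun u => (qbar u - q u) * Real.exp (c * u)) ((hd s hs0).mul (hexp s))]
      have hfz : f s = 0 := hft s hs
      have hg := hgap (q s) (qbar s - q s) (hnn s hs0)
      rw [show q s + (qbar s - q s) = qbar s by ring] at hg
      have hb : (lamL (qbar s) - lamC (qbar s) - Y s + f s) - (lamL (q s) - lamC (q s) - Y s)
          ≤ -(c * (qbar s - q s)) := by linarith
      have hmul := mul_le_mul_of_nonneg_right hb (Real.exp_pos (c * s)).le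
      nlinarith [hmul]
  intro s hst
  refine ⟨hnn s (ht.trans hst), ?_⟩
  have hF := hFanti (show t ∈ Ici t from le_refl t) (show s ∈ Ici t from hst) hst
  simp only at hF
  have het := Real.exp_pos (c * t)
  have hes := Real.exp_pos (c * s)
  have hkey : Real.exp (-c * (s - t)) * Real.exp (c * s) = Real.exp (c * t) := by
    rw [← Real.exp_add]; ring_nf
  rw [← mul_le_mul_iff_of_pos_right hes]
  calc (qbar s - q s) * Real.exp (c * s) ≤ (qbar t - q t) * Real.exp (c * t) := hF
    _ ≤ (∫ u in (0:ℝ)..t, f u) * Real.exp (c * t) :=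
        mul_le_mul_of_nonneg_right hdt het.le
    _ = (∫ u in (0:ℝ)..t, f u) * Real.exp (-c * (s - t)) * Real.exp (c * s) := by
        rw [mul_assoc, hkey]
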